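/- arXiv:2404.10284 — 6 statements merged into one kernel-verified Lean document; each statement's English description precedes it below -/
import Mathlib

section
/- If A₁, …, Aₙ are positive semidefinite real symmetric n × n matrices, then their mixed discriminant is nonnegative: D(A₁, …, Aₙ) ≥ 0. If all the Aᵢ are positive definite, then D(A₁, …, Aₙ) > 0. -/
open Matrix Finset

/-- One permutation's determinant term, as a multilinear map in the matrices. -/
noncomputable def permDet (n : ℕ) (σ : Equiv.Perm (Fin n)) :
    MultilinearMap ℝ (fun _ : Fin n => Matrix (Fin n) (Fin n) ℝ) ℝ where
  toFun M := (Matrix.of fun i j => M (σ j) i j).det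
  map_update_add' M k B C := by
    rename_i inst
    obtain rfl : inst = instDecidableEqFin n := Subsingleton.elim _ _
    have key : ∀ X : Matrix (Fin n) (Fin n) ℝ,
        (Matrix.of fun i j => (Function.update M k X) (σ j) i j) =
          (Matrix.of fun i j => (Function.update M k 0) (σ j) i j).updateCol
            (σ⁻¹ k) (fun i => X i (σ⁻¹ k)) := by
      intro X
      ext i j
      by_cases h : j = σ⁻¹ k
      · subst h
        simp [Function.update, updateCol_apply]
      · have hσ : σ j ≠ k := fun hh => h (by simp [← hh])
        simp [Function.update, updateCol_apply, h, hσ]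
        exact fun hh => absurd hh h
    beta_reduce
    rw [key (B + C), key B, key C]
    have : (fun i => (B + C) i (σ⁻¹ k)) =
        (fun i => B i (σ⁻¹ k)) + fun i => C i (σ⁻¹ k) := rfl
    rw [this]
    exact det_updateCol_add _ (σ⁻¹ k) _ _
  map_update_smul' M k c B := by
    rename_i inst
    obtain rfl : inst = instDecidableEqFin n := Subsingleton.elim _ _
    have key : ∀ X : Matrix (Fin n) (Fin n) ℝ,
        (Matrix.of fun i j => (Function.update M k X) (σ j) i j) =
          (Matrix.of fun i j => (Function.update M k 0) (σ j) i j).updateCol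
            (σ⁻¹ k) (fun i => X i (σ⁻¹ k)) := by
      intro X
      ext i j
      by_cases h : j = σ⁻¹ k
      · subst h
        simp [Function.update, updateCol_apply]
      · have hσ : σ j ≠ k := fun hh => h (by simp [← hh])
        simp [Function.update, updateCol_apply, h, hσ]
        exact fun hh => absurd hh h
    beta_reduce
    rw [key (c • B), key B]
    have : (fun i => (c • B) i (σ⁻¹ k)) = c • fun i => B i (σ⁻¹ k) := rfl
    rw [this, smul_eq_mul]
    exact det_updateCol_smul _ (σ⁻¹ k) c _

/-- `n!` times the mixed discriminant, as a multilinear map. -/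
noncomputable def discAux (n : ℕ) :
    MultilinearMap ℝ (fun _ : Fin n => Matrix (Fin n) (Fin n) ℝ) ℝ :=
  ∑ σ : Equiv.Perm (Fin n), permDet n σ

lemma discAux_apply (n : ℕ) (M : Fin n → Matrix (Fin n) (Fin n) ℝ) :
    discAux n M = ∑ σ : Equiv.Perm (Fin n), (Matrix.of fun i j => M (σ j) i j).det := by
  simp [discAux, permDet]

/-- The rank-one formula: the value on a family of rank-one psd matrices is a square. -/
lemma discAux_vecMulVec (n : ℕ) (w : Fin n → Fin n → ℝ) :
    discAux n (fun i => vecMulVec (w i) (w i)) =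
      (Matrix.of fun i j => w j i).det ^ 2 := by
  rw [discAux_apply]
  have step : ∀ σ : Equiv.Perm (Fin n),
      (Matrix.of fun i j => vecMulVec (w (σ j)) (w (σ j)) i j).det =
        ((Equiv.Perm.sign σ : ℤ) : ℝ) * (∏ j, w (σ j) j) *
          (Matrix.of fun i j => w j i).det := by
    intro σ
    have h1 : (Matrix.of fun i j => vecMulVec (w (σ j)) (w (σ j)) i j) =
        Matrix.of fun i j => (fun j' => w (σ j') j') j *
          ((Matrix.of fun i j => w j i).submatrix id σ) i j := by
      ext i j
      simp [vecMulVec, mul_comm]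
    rw [h1, det_mul_row, det_permute']
    ring
  simp only [step]
  have h2 : (Matrix.of fun i j => w j i)ᵀ.det =
      ∑ σ : Equiv.Perm (Fin n), ((Equiv.Perm.sign σ : ℤ) : ℝ) * ∏ j, w (σ j) j := by
    rw [Matrix.det_apply]
    refine Finset.sum_congr rfl fun σ _ => ?_
    simp [Units.smul_def, zsmul_eq_mul]
  rw [← Finset.sum_mul] at *
  rw [← h2, Matrix.det_transpose, sq]

lemma discAux_nonneg {n : ℕ} {M : Fin n → Matrix (Fin n) (Fin n) ℝ}
    (h : ∀ i, (M i).PosSemidef) : 0 ≤ discAux n M := by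
  classical
  have hex : ∀ i, ∃ X : Matrix (Fin n) (Fin n) ℝ, IsSelfAdjoint X ∧ X * X = M i := by
    open scoped MatrixOrder in
    exact fun i => (CFC.exists_sqrt_of_isSelfAdjoint_of_quasispectrumRestricts (h i).isHermitian
      (QuasispectrumRestricts.nnreal_of_nonneg (h i).nonneg)).imp fun X hX => ⟨hX.1, hX.2.2⟩
  choose S hSsa hSS using hex
  set v : Fin n → Fin n → Fin n → ℝ := fun i k a => S i k a with hv
  have hM : ∀ i, M i = ∑ k, vecMulVec (v i k) (v i k) := by
    intro i
    ext a b
    have hs : S i * S i = M i := hSS i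
    have hsymm : ∀ a k : Fin n, S i a k = S i k a := by
      intro a k
      have := congrFun (congrFun (hSsa i) a) k
      simpa [Matrix.star_apply] using this.symm
    calc M i a b = (S i * S i) a b := by rw [hs]
      _ = ∑ k, S i a k * S i k b := Matrix.mul_apply
      _ = ∑ k, v i k a * v i k b := by
          refine Finset.sum_congr rfl fun k _ => ?_
          rw [hsymm a k]
      _ = (∑ k, vecMulVec (v i k) (v i k)) a b := by
          simp [vecMulVec, Matrix.sum_apply]
  have : M = fun i => ∑ k, vecMulVec (v i k) (v i k) := funext hM
  rw [this, MultilinearMap.map_sum]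
  refine Finset.sum_nonneg fun f _ => ?_
  rw [discAux_vecMulVec]
  positivity

lemma discAux_one (n : ℕ) : discAux n (fun _ => (1 : Matrix (Fin n) (Fin n) ℝ)) = n.factorial := by
  rw [discAux_apply]
  have : (Matrix.of fun i j => (1 : Matrix (Fin n) (Fin n) ℝ) i j) = 1 := rfl
  simp [this, Finset.card_univ, Fintype.card_perm, Fintype.card_fin]

lemma exists_sub_smul_one_posSemidef {n : ℕ} {A : Matrix (Fin n) (Fin n) ℝ}
    (h : A.PosDef) : ∃ ε : ℝ, 0 < ε ∧ (A - ε • 1).PosSemidef := by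
  classical
  rcases isEmpty_or_nonempty (Fin n) with hn | hn
  · refine ⟨1, one_pos, ?_, ?_⟩
    · ext i j; exact (hn.false i).elim
    · intro x
      simp [Subsingleton.elim x 0]
  · set ε := Finset.univ.inf' (Finset.univ_nonempty) h.1.eigenvalues with hε
    refine ⟨ε, ?_, ?_⟩
    · obtain ⟨i, -, hi⟩ := Finset.exists_mem_eq_inf' (Finset.univ_nonempty) h.1.eigenvalues
      rw [hε, hi]
      exact h.eigenvalues_pos i
    · have hU : (h.1.eigenvectorUnitary : Matrix (Fin n) (Fin n) ℝ) *
          star (h.1.eigenvectorUnitary : Matrix (Fin n) (Fin n) ℝ) = 1 :=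
        Matrix.mem_unitaryGroup_iff.mp h.1.eigenvectorUnitary.2
      have key : A - ε • 1 = (h.1.eigenvectorUnitary : Matrix (Fin n) (Fin n) ℝ) *
          diagonal (fun i => h.1.eigenvalues i - ε) *
          star (h.1.eigenvectorUnitary : Matrix (Fin n) (Fin n) ℝ) := by
        conv_lhs => rw [h.1.spectral_theorem, Unitary.conjStarAlgAut_apply]
        have h1 : (ε • 1 : Matrix (Fin n) (Fin n) ℝ) =
            (h.1.eigenvectorUnitary : Matrix (Fin n) (Fin n) ℝ) * (ε • 1) *
              star (h.1.eigenvectorUnitary : Matrix (Fin n) (Fin n) ℝ) := by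
          rw [Matrix.mul_smul, mul_one, Matrix.smul_mul, hU]
        rw [h1, ← Matrix.sub_mul, ← Matrix.mul_sub]
        congr 1
        congr 1
        ext i j
        by_cases hij : i = j <;>
          simp [diagonal, Matrix.one_apply, hij, RCLike.ofReal]
      rw [key]
      exact Matrix.PosSemidef.mul_mul_conjTranspose_same
        (posSemidef_diagonal_iff.mpr fun i =>
          sub_nonneg.mpr (Finset.inf'_le _ (Finset.mem_univ i))) _

/-- The mixed discriminant of `n` real `n × n` matrices. -/
noncomputable def mixedDisc (n : ℕ) (A : Fin n → Matrix (Fin n) (Fin n) ℝ) : ℝ :=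
  ((n.factorial : ℝ))⁻¹ *
    ∑ σ : Equiv.Perm (Fin n), (Matrix.of fun i j => A (σ j) i j).det

lemma mixedDisc_eq (n : ℕ) (A : Fin n → Matrix (Fin n) (Fin n) ℝ) :
    mixedDisc n A = ((n.factorial : ℝ))⁻¹ * discAux n A := by
  rw [mixedDisc, discAux_apply]

/-- If `A₁, …, Aₙ` are positive semidefinite real symmetric matrices then
`D(A₁, …, Aₙ) ≥ 0`; if they are positive definite then `D(A₁, …, Aₙ) > 0`. -/
theorem mixedDisc_nonneg_of_posSemidef (n : ℕ)
    (A : Fin n → Matrix (Fin n) (Fin n) ℝ) :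
    ((∀ i, (A i).PosSemidef) → 0 ≤ mixedDisc n A) ∧
    ((∀ i, (A i).PosDef) → 0 < mixedDisc n A) := by
  classical
  have hfac : (0 : ℝ) < ((n.factorial : ℝ))⁻¹ := by
    rw [inv_pos]; exact_mod_cast n.factorial_pos
  constructor
  · intro h
    rw [mixedDisc_eq]
    exact mul_nonneg hfac.le (discAux_nonneg h)
  · intro h
    rw [mixedDisc_eq]
    refine mul_pos hfac ?_
    choose ε hεpos hεpsd using fun i => exists_sub_smul_one_posSemidef (h i)
    set g : Fin n → Fin 2 → Matrix (Fin n) (Fin n) ℝ :=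
      fun i => ![ε i • 1, A i - ε i • 1] with hg
    have hA : A = fun i => ∑ k : Fin 2, g i k := by
      funext i
      simp [hg, Fin.sum_univ_two]
    have hgpsd : ∀ i k, (g i k).PosSemidef := by
      intro i k
      fin_cases k
      · have hgi : g i 0 = diagonal (fun _ => ε i) := by
          ext a b
          by_cases hab : a = b <;> simp [hg, Matrix.one_apply, hab]
        simpa [hgi] using posSemidef_diagonal_iff.mpr fun _ : Fin n => (hεpos i).le
      · exact hεpsd i
    rw [hA, MultilinearMap.map_sum]
    have hterm : ∀ f : Fin n → Fin 2, 0 ≤ discAux n (fun i => g i (f i)) :=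
      fun f => discAux_nonneg fun i => hgpsd i (f i)
    have hzero : discAux n (fun i => g i 0) = (∏ i, ε i) * n.factorial := by
      have : (fun i => g i 0) = fun i => ε i • (1 : Matrix (Fin n) (Fin n) ℝ) := by
        funext i; simp [hg]
      rw [this, MultilinearMap.map_smul_univ, discAux_one, smul_eq_mul]
    have hpos : 0 < discAux n (fun i => g i 0) := by
      rw [hzero]
      exact mul_pos (Finset.prod_pos fun i _ => hεpos i) (by exact_mod_cast n.factorial_pos)
    calc (0 : ℝ) < discAux n (fun i => g i ((fun _ => 0) i)) := hpos
      _ ≤ ∑ f : Fin n → Fin 2, discAux n (fun i => g i (f i)) :=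
          Finset.single_le_sum (fun f _ => hterm f) (Finset.mem_univ _)
end

section
/- Let p(x) = Σ_{k=0}^{n} C(n,k) a_k x^k be a univariate real polynomial all of whose roots are real. Then a_k² ≥ a_{k-1} a_{k+1} for all 1 ≤ k ≤ n−1. -/
open Polynomial Multiset

private lemma esymm_zero_of_card_lt {s : Multiset ℝ} {j : ℕ} (h : Multiset.card s < j) :
    s.esymm j = 0 := by
  have h0 : Multiset.powersetCard j s = 0 := by
    have := Multiset.powersetCard_card_add s (i := j - Multiset.card s) (by omega)
    rwa [show Multiset.card s + (j - Multiset.card s) = j by omega] at this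
  simp [Multiset.esymm, h0]

private lemma esymm_cons_real (a : ℝ) (s : Multiset ℝ) (j : ℕ) :
    (a ::ₘ s).esymm (j + 1) = s.esymm (j + 1) + a * s.esymm j := by
  rw [Multiset.esymm, Multiset.powersetCard_cons, Multiset.map_add, Multiset.sum_add,
    Multiset.map_map]
  congr 1
  rw [Multiset.esymm, ← Multiset.sum_map_mul_left]
  apply congrArg
  apply Multiset.map_congr rfl
  intro t _
  simp [Multiset.prod_cons]

private lemma esymm_card_real (s : Multiset ℝ) : s.esymm (Multiset.card s) = s.prod := by
  induction s using Multiset.induction_on with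
  | empty => simp [Multiset.esymm, Multiset.powersetCard_zero_left]
  | cons a s ih =>
    rw [Multiset.card_cons, esymm_cons_real, esymm_zero_of_card_lt (by omega), ih, zero_add,
      Multiset.prod_cons]

private lemma esymm_one_real (s : Multiset ℝ) : s.esymm 1 = s.sum := by
  rw [Multiset.esymm, Multiset.powersetCard_one, Multiset.map_map]
  simp [Function.comp]

private lemma esymm_two_real (s : Multiset ℝ) :
    2 * s.esymm 2 = s.sum ^ 2 - (s.map (fun x => x ^ 2)).sum := by
  induction s using Multiset.induction_on with
  | empty =>
    rw [show (2:ℕ) = 1 + 1 from rfl]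
    simp [Multiset.esymm, Multiset.powersetCard_zero_right]
  | cons a s ih =>
    rw [show (2:ℕ) = 1 + 1 from rfl] at ih ⊢
    rw [esymm_cons_real, esymm_one_real, Multiset.sum_cons, Multiset.map_cons, Multiset.sum_cons]
    linear_combination ih

private lemma cs_real (s : Multiset ℝ) :
    s.sum ^ 2 ≤ (Multiset.card s : ℝ) * (s.map (fun x => x ^ 2)).sum := by
  induction s using Multiset.induction_on with
  | empty => simp
  | cons a s ih =>
    rw [Multiset.sum_cons, Multiset.map_cons, Multiset.sum_cons, Multiset.card_cons]
    push_cast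
    have hQ : 0 ≤ (s.map (fun x => x ^ 2)).sum := Multiset.sum_nonneg (by
      intro x hx
      obtain ⟨y, _, rfl⟩ := Multiset.mem_map.1 hx
      positivity)
    have hm : (0:ℝ) ≤ (Multiset.card s : ℝ) := Nat.cast_nonneg _
    rcases eq_or_ne s 0 with rfl | hs0
    · simp
    · have hm1 : (1:ℝ) ≤ (Multiset.card s : ℝ) := by
        exact_mod_cast Multiset.card_pos.2 hs0
      have key : 0 ≤ (Multiset.card s : ℝ) *
          (((Multiset.card s : ℝ) + 1) * (a ^ 2 + (s.map (fun x => x ^ 2)).sum)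
            - (a + s.sum) ^ 2) := by
        nlinarith [sq_nonneg ((Multiset.card s : ℝ) * a - s.sum), ih,
          mul_le_mul_of_nonneg_left ih hm]
      nlinarith [key, hm1, mul_le_mul_of_nonneg_left key (le_of_lt (by linarith : (0:ℝ) < 1))]

private lemma esymm_pred_card (s : Multiset ℝ) (hs : s ≠ 0) (h0 : (0:ℝ) ∉ s) :
    s.esymm (Multiset.card s - 1) = s.prod * (s.map (fun x => x⁻¹)).sum := by
  induction s using Multiset.induction_on with
  | empty => exact absurd rfl hs
  | cons a s ih =>
    have ha : a ≠ 0 := fun h => h0 (by rw [← h]; exact Multiset.mem_cons_self _ _)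
    have h0s : (0:ℝ) ∉ s := fun h => h0 (Multiset.mem_cons_of_mem h)
    rcases eq_or_ne s 0 with rfl | hs0
    · simp [Multiset.esymm, Multiset.powersetCard_zero_left, ha]
    · obtain ⟨j, hj⟩ : ∃ j, Multiset.card s = j + 1 :=
        ⟨Multiset.card s - 1, by have := Multiset.card_pos.2 hs0; omega⟩
      rw [Multiset.card_cons, hj, show j + 1 + 1 - 1 = j + 1 from rfl, esymm_cons_real]
      have ihs := ih hs0 h0s
      rw [hj, show j + 1 - 1 = j from rfl] at ihs
      have hsat : s.esymm (j + 1) = s.prod := by rw [← hj]; exact esymm_card_real s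
      rw [ihs, hsat, Multiset.prod_cons, Multiset.map_cons, Multiset.sum_cons]
      field_simp

private lemma esymm_sub_two_card (s : Multiset ℝ) (h2 : 2 ≤ Multiset.card s) (h0 : (0:ℝ) ∉ s) :
    s.esymm (Multiset.card s - 2) = s.prod * (s.map (fun x => x⁻¹)).esymm 2 := by
  induction s using Multiset.induction_on with
  | empty => simp at h2
  | cons a s ih =>
    have ha : a ≠ 0 := fun h => h0 (by rw [← h]; exact Multiset.mem_cons_self _ _)
    have h0s : (0:ℝ) ∉ s := fun h => h0 (Multiset.mem_cons_of_mem h)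
    rcases lt_or_ge (Multiset.card s) 2 with hlt | hge
    · have hc1 : Multiset.card s = 1 := by rw [Multiset.card_cons] at h2; omega
      obtain ⟨b, rfl⟩ := Multiset.card_eq_one.1 hc1
      have hb : b ≠ 0 := fun h => h0s (by rw [← h]; exact Multiset.mem_singleton_self _)
      rw [Multiset.card_cons, hc1, show 1 + 1 - 2 = 0 from rfl]
      have e2 : ((a ::ₘ ({b} : Multiset ℝ)).map (fun x => x⁻¹)).esymm 2 = a⁻¹ * b⁻¹ := by
        have : ((a ::ₘ ({b} : Multiset ℝ)).map (fun x => x⁻¹)) = a⁻¹ ::ₘ {b⁻¹} := by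
          simp
        rw [this, show (2:ℕ) = Multiset.card (a⁻¹ ::ₘ ({b⁻¹} : Multiset ℝ)) by simp,
          esymm_card_real]
        simp
      rw [e2]
      have : (a ::ₘ ({b} : Multiset ℝ)).esymm 0 = 1 := by
        simp [Multiset.esymm, Multiset.powersetCard_zero_left]
      rw [this, Multiset.prod_cons, Multiset.prod_singleton]
      field_simp
    · obtain ⟨j, hj⟩ : ∃ j, Multiset.card s = j + 2 := ⟨Multiset.card s - 2, by omega⟩
      rw [Multiset.card_cons, hj, show j + 2 + 1 - 2 = j + 1 from rfl, esymm_cons_real]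
      have ih2 := ih hge h0s
      rw [hj, show j + 2 - 2 = j from rfl] at ih2
      have hpred := esymm_pred_card s (Multiset.card_pos.1 (by omega)) h0s
      rw [hj, show j + 2 - 1 = j + 1 from rfl] at hpred
      rw [ih2, hpred, Multiset.map_cons,
        show (2:ℕ) = 1 + 1 from rfl, esymm_cons_real, esymm_one_real,
        Multiset.prod_cons]
      rw [show (1:ℕ) + 1 = 2 from rfl]
      field_simp
      ring

example : True := trivial

private lemma key_esymm (s : Multiset ℝ) (h2 : 2 ≤ Multiset.card s) :
    2 * (Multiset.card s : ℝ) * (s.esymm (Multiset.card s) * s.esymm (Multiset.card s - 2)) ≤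
      ((Multiset.card s : ℝ) - 1) * s.esymm (Multiset.card s - 1) ^ 2 := by
  by_cases h0 : (0:ℝ) ∈ s
  · rw [esymm_card_real, Multiset.prod_eq_zero h0]
    have hm : (2:ℝ) ≤ (Multiset.card s : ℝ) := by exact_mod_cast h2
    have : (0:ℝ) ≤ ((Multiset.card s : ℝ) - 1) * s.esymm (Multiset.card s - 1) ^ 2 :=
      mul_nonneg (by linarith) (sq_nonneg _)
    linarith [this]
  · have hs0 : s ≠ 0 := Multiset.card_pos.1 (by omega)
    have h6 := esymm_pred_card s hs0 h0
    have h7 := esymm_sub_two_card s h2 h0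
    have h4 := esymm_two_real (s.map (fun x => x⁻¹))
    have h5 := cs_real (s.map (fun x => x⁻¹))
    rw [Multiset.card_map] at h5
    rw [esymm_card_real, h6, h7]
    set m := (Multiset.card s : ℝ)
    set P := s.prod
    set T := (s.map (fun x => x⁻¹)).sum
    set Q := ((s.map (fun x => x⁻¹)).map (fun x => x ^ 2)).sum
    set E2 := (s.map (fun x => x⁻¹)).esymm 2
    -- goal : 2 * m * (P * (P * E2)) ≤ (m - 1) * (P * T) ^ 2
    have hh : P ^ 2 * T ^ 2 ≤ P ^ 2 * (m * Q) := mul_le_mul_of_nonneg_left h5 (sq_nonneg P)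
    have h8 : 2 * (2 * m * (P * (P * E2))) = 2 * m * P ^ 2 * (T ^ 2 - Q) := by
      linear_combination (2 * m * P ^ 2) * h4
    nlinarith [hh, h8]

private lemma rr_of_roots_real (p : Polynomial ℝ) (hp : p ≠ 0)
    (h : ∀ z : ℂ, (p.map (algebraMap ℝ ℂ)).IsRoot z → z.im = 0) :
    Multiset.card p.roots = p.natDegree := by
  classical
  set f := algebraMap ℝ ℂ
  have hinj : Function.Injective f := f.injective
  have hm : p.map f ≠ 0 := (Polynomial.map_ne_zero_iff hinj).2 hp
  have hcardC : Multiset.card (p.map f).roots = (p.map f).natDegree := by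
    rw [← Polynomial.splits_iff_card_roots]
    exact IsAlgClosed.splits (p.map f)
  have hle : (p.map f).roots ≤ p.roots.map f := by
    rw [Multiset.le_iff_count]
    intro z
    by_cases hz : z ∈ (p.map f).roots
    · have him : z.im = 0 := h z (Polynomial.isRoot_of_mem_roots hz)
      have hz' : z = f z.re := by
        apply Complex.ext <;> simp [him, f]
      rw [Polynomial.count_roots, hz', ← Polynomial.eq_rootMultiplicity_map hinj,
        Multiset.count_map_eq_count' f _ hinj, Polynomial.count_roots]
    · rw [Multiset.count_eq_zero_of_notMem hz]
      exact Nat.zero_le _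
  have h1 : p.natDegree ≤ Multiset.card p.roots := by
    have := Multiset.card_le_card hle
    rw [Multiset.card_map] at this
    have hdeg : (p.map f).natDegree = p.natDegree := Polynomial.natDegree_map_eq_of_injective hinj p
    omega
  exact le_antisymm (Polynomial.card_roots' p) h1

private lemma rr_derivative (q : Polynomial ℝ)
    (h : Multiset.card q.roots = q.natDegree) :
    Multiset.card (Polynomial.derivative q).roots = (Polynomial.derivative q).natDegree := by
  have hA := Polynomial.natDegree_derivative_le q
  have hB := Polynomial.card_roots' (Polynomial.derivative q)
  have hC := Polynomial.card_roots_le_derivative q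
  omega

set_option maxHeartbeats 1000000 in
/-- Newton's inequality: if `p(x) = Σ_{k=0}^{n} C(n,k) a_k x^k` has only real roots,
then `a_k² ≥ a_{k-1} a_{k+1}` for all `1 ≤ k ≤ n − 1`. -/
theorem newton_inequality (n : ℕ) (a : ℕ → ℝ) (p : Polynomial ℝ)
    (hp : p = ∑ k ∈ Finset.range (n + 1),
      Polynomial.C ((n.choose k : ℝ) * a k) * Polynomial.X ^ k)
    (hroots : ∀ z : ℂ, (p.map (algebraMap ℝ ℂ)).IsRoot z → z.im = 0)
    (k : ℕ) (hk1 : 1 ≤ k) (hk2 : k ≤ n - 1) :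
    a (k - 1) * a (k + 1) ≤ (a k) ^ 2 := by
  have hkn : k + 1 ≤ n := by omega
  set α := a (k - 1) with hα'
  set β := a k with hβ'
  set γ := a (k + 1) with hγ'
  have hp0 : p ≠ 0 := by
    intro h0
    have h1 := hroots Complex.I (by simp [h0])
    simp [Complex.I_im] at h1
  have hdegp : p.natDegree ≤ n := by
    rw [hp]
    apply Polynomial.natDegree_sum_le_of_forall_le
    intro i hi
    exact (Polynomial.natDegree_C_mul_X_pow_le _ _).trans
      (Nat.lt_succ_iff.mp (Finset.mem_range.mp hi))
  have hcoeff : ∀ j, j ≤ n → p.coeff j = (n.choose j : ℝ) * a j := by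
    intro j hj
    rw [hp, Polynomial.finset_sum_coeff, Finset.sum_eq_single j]
    · rw [Polynomial.coeff_C_mul, Polynomial.coeff_X_pow, if_pos rfl, mul_one]
    · intro b _ hbj
      rw [Polynomial.coeff_C_mul, Polynomial.coeff_X_pow, if_neg (Ne.symm hbj), mul_zero]
    · intro hj'
      exact absurd (Finset.mem_range.mpr (by omega)) hj'
  set g := Polynomial.derivative^[k - 1] p with hg
  have hrrg : Multiset.card g.roots = g.natDegree := by
    have hiter : ∀ j : ℕ, Multiset.card ((Polynomial.derivative^[j]) p).roots =
        ((Polynomial.derivative^[j]) p).natDegree := by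
      intro j
      induction j with
      | zero => simpa using rr_of_roots_real p hp0 hroots
      | succ j ih => rw [Function.iterate_succ_apply']; exact rr_derivative _ ih
    exact hiter (k - 1)
  set u := n - k with hu
  have hu1 : 1 ≤ u := by omega
  have hgdeg : g.natDegree ≤ u + 1 := by
    apply Polynomial.natDegree_le_iff_coeff_eq_zero.2
    intro j hj
    rw [hg, Polynomial.coeff_iterate_derivative,
      Polynomial.coeff_eq_zero_of_natDegree_lt (lt_of_le_of_lt hdegp (by omega)), smul_zero]
  set M0 := (k - 1).descFactorial (k - 1) * n.choose (k - 1) with hM0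
  set M1 := k.descFactorial (k - 1) * n.choose k with hM1
  set M2 := (k + 1).descFactorial (k - 1) * n.choose (k + 1) with hM2
  have hc0v : g.coeff 0 = (M0 : ℝ) * α := by
    rw [hg, Polynomial.coeff_iterate_derivative, zero_add, hcoeff (k - 1) (by omega),
      nsmul_eq_mul, hM0]
    push_cast
    ring
  have hc1v : g.coeff 1 = (M1 : ℝ) * β := by
    rw [hg, Polynomial.coeff_iterate_derivative, show 1 + (k - 1) = k by omega,
      hcoeff k (by omega), nsmul_eq_mul, hM1]
    push_cast
    ring
  have hc2v : g.coeff 2 = (M2 : ℝ) * γ := by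
    rw [hg, Polynomial.coeff_iterate_derivative, show 2 + (k - 1) = k + 1 by omega,
      hcoeff (k + 1) (by omega), nsmul_eq_mul, hM2]
    push_cast
    ring
  -- ℕ factorial identities
  have fact0 : M0 * (u + 1).factorial = n.factorial := by
    have e := Nat.choose_mul_factorial_mul_factorial (show k - 1 ≤ n by omega)
    rw [show n - (k - 1) = u + 1 by omega] at e
    calc M0 * (u + 1).factorial
        = n.choose (k - 1) * (k - 1).factorial * (u + 1).factorial := by
          rw [hM0, Nat.descFactorial_self]; ring
      _ = n.factorial := e
  have fact1 : M1 * u.factorial = n.factorial := by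
    have hd : k.descFactorial (k - 1) = k.factorial := by
      rw [Nat.descFactorial_eq_factorial_mul_choose, Nat.choose_symm (by omega : 1 ≤ k),
        Nat.choose_one_right, mul_comm]
      exact Nat.mul_factorial_pred (by omega)
    have e := Nat.choose_mul_factorial_mul_factorial (show k ≤ n by omega)
    rw [show n - k = u from rfl] at e
    calc M1 * u.factorial = n.choose k * k.factorial * u.factorial := by
          rw [hM1, hd]; ring
      _ = n.factorial := e
  have fact2 : M2 * 2 * (u - 1).factorial = n.factorial := by
    have hd2 : (k + 1).descFactorial (k - 1) * 2 = (k + 1).factorial := by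
      have e2 := Nat.choose_mul_factorial_mul_factorial (show k - 1 ≤ k + 1 by omega)
      rw [show k + 1 - (k - 1) = 2 by omega, show (2 : ℕ).factorial = 2 from rfl] at e2
      rw [Nat.descFactorial_eq_factorial_mul_choose]
      calc (k - 1).factorial * (k + 1).choose (k - 1) * 2
          = (k + 1).choose (k - 1) * (k - 1).factorial * 2 := by ring
        _ = (k + 1).factorial := e2
    have e3 := Nat.choose_mul_factorial_mul_factorial (show k + 1 ≤ n from hkn)
    rw [show n - (k + 1) = u - 1 by omega] at e3
    calc M2 * 2 * (u - 1).factorial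
        = ((k + 1).descFactorial (k - 1) * 2) * n.choose (k + 1) * (u - 1).factorial := by
          rw [hM2]; ring
      _ = n.choose (k + 1) * (k + 1).factorial * (u - 1).factorial := by rw [hd2]; ring
      _ = n.factorial := e3
  have idB : M1 = M0 * (u + 1) := by
    apply Nat.eq_of_mul_eq_mul_right (Nat.factorial_pos u)
    calc M1 * u.factorial = n.factorial := fact1
      _ = M0 * (u + 1).factorial := fact0.symm
      _ = M0 * (u + 1) * u.factorial := by rw [Nat.factorial_succ]; ring
  have idC : M2 * 2 = M0 * ((u + 1) * u) := by
    apply Nat.eq_of_mul_eq_mul_right (Nat.factorial_pos (u - 1))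
    calc M2 * 2 * (u - 1).factorial = n.factorial := fact2
      _ = M0 * (u + 1).factorial := fact0.symm
      _ = M0 * (u + 1) * u.factorial := by rw [Nat.factorial_succ]; ring
      _ = M0 * (u + 1) * (u * (u - 1).factorial) := by
          rw [Nat.mul_factorial_pred (by omega : u ≠ 0)]
      _ = M0 * ((u + 1) * u) * (u - 1).factorial := by ring
  have hM1R : (M1 : ℝ) = (M0 : ℝ) * ((u : ℝ) + 1) := by exact_mod_cast idB
  have hM2R : (M2 : ℝ) * 2 = (M0 : ℝ) * (((u : ℝ) + 1) * (u : ℝ)) := by exact_mod_cast idC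
  have hM0posN : 0 < M0 := Nat.mul_pos
    (Nat.pos_of_ne_zero (fun h => by rw [Nat.descFactorial_eq_zero_iff_lt] at h; omega))
    (Nat.choose_pos (by omega))
  have hM0pos : (0 : ℝ) < (M0 : ℝ) := by exact_mod_cast hM0posN
  rcases le_or_gt (α * γ) 0 with hneg | hpos
  · exact le_trans hneg (sq_nonneg β)
  have hγ : γ ≠ 0 := by
    intro h; rw [h, mul_zero] at hpos; exact lt_irrefl 0 hpos
  have hM2posN : 0 < M2 := Nat.mul_pos
    (Nat.pos_of_ne_zero (fun h => by rw [Nat.descFactorial_eq_zero_iff_lt] at h; omega))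
    (Nat.choose_pos (by omega))
  have hc2ne : g.coeff 2 ≠ 0 := by
    rw [hc2v]
    exact mul_ne_zero (by exact_mod_cast hM2posN.ne') hγ
  have hm2 : 2 ≤ g.natDegree := Polynomial.le_natDegree_of_ne_zero hc2ne
  set m := g.natDegree with hm
  set s := g.roots with hs
  have hkey0 := key_esymm s (by rw [hrrg]; exact hm2)
  rw [hrrg] at hkey0
  have hv0 := Polynomial.coeff_eq_esymm_roots_of_card hrrg (show 0 ≤ m from Nat.zero_le _)
  have hv1 := Polynomial.coeff_eq_esymm_roots_of_card hrrg (show 1 ≤ m by omega)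
  have hv2 := Polynomial.coeff_eq_esymm_roots_of_card hrrg (show 2 ≤ m from hm2)
  rw [← hm, ← hs] at hv0 hv1 hv2
  rw [Nat.sub_zero] at hv0
  clear_value g m s u M0 M1 M2 α β γ
  have hsq : ∀ j : ℕ, ((-1 : ℝ) ^ j) ^ 2 = 1 := fun j => by
    rw [← pow_mul, mul_comm, pow_mul, neg_one_sq, one_pow]
  have hmmeq : (-1 : ℝ) ^ m = (-1 : ℝ) ^ (m - 2) := by
    conv_lhs => rw [show m = (m - 2) + 2 by omega]
    rw [pow_add]
    norm_num
  have hc0c2 : g.coeff 0 * g.coeff 2 =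
      g.leadingCoeff ^ 2 * (s.esymm m * s.esymm (m - 2)) := by
    rw [hv0, hv2, hmmeq]
    linear_combination g.leadingCoeff ^ 2 * s.esymm m * s.esymm (m - 2) * hsq (m - 2)
  have hc1sq : g.coeff 1 ^ 2 = g.leadingCoeff ^ 2 * s.esymm (m - 1) ^ 2 := by
    rw [hv1]
    linear_combination g.leadingCoeff ^ 2 * s.esymm (m - 1) ^ 2 * hsq (m - 1)
  have hkey : 2 * (m : ℝ) * (g.coeff 0 * g.coeff 2) ≤ ((m : ℝ) - 1) * g.coeff 1 ^ 2 := by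
    rw [hc0c2, hc1sq]
    have h := mul_le_mul_of_nonneg_left hkey0 (sq_nonneg g.leadingCoeff)
    nlinarith [h]
  rw [hc0v, hc1v, hc2v, hM1R] at hkey
  have hkey2 : (m : ℝ) * (((M0 : ℝ) ^ 2 * (((u : ℝ) + 1) * (u : ℝ))) * (α * γ)) ≤
      ((m : ℝ) - 1) * (((M0 : ℝ) * ((u : ℝ) + 1)) * β) ^ 2 := by
    calc (m : ℝ) * (((M0 : ℝ) ^ 2 * (((u : ℝ) + 1) * (u : ℝ))) * (α * γ))
        = 2 * (m : ℝ) * (((M0 : ℝ) * α) * ((M2 : ℝ) * γ)) := by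
          linear_combination (-(m : ℝ) * (M0 : ℝ) * α * γ) * hM2R
      _ ≤ ((m : ℝ) - 1) * (((M0 : ℝ) * ((u : ℝ) + 1)) * β) ^ 2 := hkey
  have hdiv : (m : ℝ) * ((u : ℝ) * (α * γ)) ≤ ((m : ℝ) - 1) * (((u : ℝ) + 1) * β ^ 2) := by
    have hpos2 : (0 : ℝ) < (M0 : ℝ) ^ 2 * ((u : ℝ) + 1) := by positivity
    apply le_of_mul_le_mul_left _ hpos2
    calc (M0 : ℝ) ^ 2 * ((u : ℝ) + 1) * ((m : ℝ) * ((u : ℝ) * (α * γ)))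
        = (m : ℝ) * (((M0 : ℝ) ^ 2 * (((u : ℝ) + 1) * (u : ℝ))) * (α * γ)) := by ring
      _ ≤ ((m : ℝ) - 1) * (((M0 : ℝ) * ((u : ℝ) + 1)) * β) ^ 2 := hkey2
      _ = (M0 : ℝ) ^ 2 * ((u : ℝ) + 1) * (((m : ℝ) - 1) * (((u : ℝ) + 1) * β ^ 2)) := by ring
  have hmuR : (m : ℝ) ≤ (u : ℝ) + 1 := by exact_mod_cast hgdeg
  have hm2R : (2 : ℝ) ≤ (m : ℝ) := by exact_mod_cast hm2
  have hu1R : (1 : ℝ) ≤ (u : ℝ) := by exact_mod_cast hu1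
  have hfac : (0 : ℝ) < ((m : ℝ) - 1) * ((u : ℝ) + 1) := by nlinarith
  have hstep : ((m : ℝ) - 1) * ((u : ℝ) + 1) * (α * γ) ≤ (m : ℝ) * (u : ℝ) * (α * γ) := by
    apply mul_le_mul_of_nonneg_right _ (le_of_lt hpos)
    nlinarith
  nlinarith [hdiv, hstep, hfac, hpos]
end

section
/- Let M be a real symmetric n × n matrix. Then M is hyperbolic (i.e., for all v, w ∈ ℝⁿ with ⟨w, Mw⟩ ≥ 0 one has ⟨v, Mw⟩² ≥ ⟨v, Mv⟩⟨w, Mw⟩) if and only if M has at most one positive eigenvalue (counted with multiplicity). -/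
open Matrix

lemma key_hyperbolic_aux (n : ℕ) (μ x y : Fin n → ℝ)
    (h1 : (Finset.univ.filter fun i => 0 < μ i).card ≤ 1)
    (hy : 0 ≤ ∑ i, μ i * (y i * y i)) :
    (∑ i, μ i * (x i * x i)) * (∑ i, μ i * (y i * y i)) ≤ (∑ i, μ i * (x i * y i)) ^ 2 := by
  rcases eq_or_lt_of_le hy with hQy | hQy
  · rw [← hQy, mul_zero]; positivity
  · obtain ⟨k, -, hk⟩ := Finset.exists_lt_of_sum_lt (f := fun _ => (0:ℝ))
      (g := fun i => μ i * (y i * y i)) (by simpa using hQy)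
    have hμk : 0 < μ k := by nlinarith [sq_nonneg (y k), sq_abs (y k)]
    have hyk : y k ≠ 0 := by rintro h; rw [h] at hk; simp at hk
    have hneg : ∀ i, i ≠ k → μ i ≤ 0 := by
      intro i hik
      by_contra h
      push_neg at h
      have : ({i, k} : Finset (Fin n)) ⊆ Finset.univ.filter fun i => 0 < μ i := by
        intro j hj
        simp only [Finset.mem_insert, Finset.mem_singleton] at hj
        rcases hj with rfl | rfl <;> simp [h, hμk]
      have := Finset.card_le_card this
      rw [Finset.card_insert_of_notMem (by simpa using hik)] at this
      simp at this; omega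
    set t : ℝ := -(x k) / y k with ht
    set z : Fin n → ℝ := fun i => x i + t * y i with hz
    have hzk : z k = 0 := by show x k + t * y k = 0; rw [ht, div_mul_cancel₀ _ hyk]; ring
    have hQz : ∑ i, μ i * (z i * z i) ≤ 0 := by
      apply Finset.sum_nonpos
      intro i _
      rcases eq_or_ne i k with rfl | hik
      · rw [hzk]; ring_nf; simp
      · exact mul_nonpos_of_nonpos_of_nonneg (hneg i hik) (mul_self_nonneg _)
    have expand : ∑ i, μ i * (z i * z i)
        = (∑ i, μ i * (x i * x i)) + 2 * t * (∑ i, μ i * (x i * y i))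
          + t ^ 2 * (∑ i, μ i * (y i * y i)) := by
      simp only [hz, Finset.mul_sum, ← Finset.sum_add_distrib]
      apply Finset.sum_congr rfl
      intro i _; ring
    set Qx := ∑ i, μ i * (x i * x i)
    set Qy := ∑ i, μ i * (y i * y i)
    set B := ∑ i, μ i * (x i * y i)
    have h2 : Qx + 2 * t * B + t ^ 2 * Qy ≤ 0 := expand ▸ hQz
    nlinarith [sq_nonneg (t * Qy + B), mul_le_mul_of_nonneg_right h2 hQy.le]

/-- A real symmetric matrix `M` is hyperbolic (for all `v, w` with `⟨w, Mw⟩ ≥ 0` one has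
`⟨v, Mw⟩² ≥ ⟨v, Mv⟩⟨w, Mw⟩`) if and only if it has at most one positive eigenvalue
(counted with multiplicity). -/
theorem hyperbolic_iff_atMostOne_pos_eigenvalue (n : ℕ)
    (M : Matrix (Fin n) (Fin n) ℝ) (hM : M.IsHermitian) :
    (∀ v w : Fin n → ℝ, 0 ≤ w ⬝ᵥ M.mulVec w →
        (v ⬝ᵥ M.mulVec v) * (w ⬝ᵥ M.mulVec w) ≤ (v ⬝ᵥ M.mulVec w) ^ 2)
      ↔ (Finset.univ.filter fun i => 0 < hM.eigenvalues i).card ≤ 1 := by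
  have hform : ∀ v w : Fin n → ℝ, v ⬝ᵥ M *ᵥ w = ∑ i, hM.eigenvalues i *
      (((star (hM.eigenvectorUnitary : Matrix (Fin n) (Fin n) ℝ)) *ᵥ v) i *
       ((star (hM.eigenvectorUnitary : Matrix (Fin n) (Fin n) ℝ)) *ᵥ w) i) := by
    intro v w
    conv_lhs => rw [hM.spectral_theorem, Unitary.conjStarAlgAut_apply]
    rw [← mulVec_mulVec, ← mulVec_mulVec, dotProduct_mulVec]
    rw [Matrix.star_eq_conjTranspose, conjTranspose_eq_transpose_of_trivial, mulVec_transpose]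
    simp [dotProduct, mulVec_diagonal, mulVec_transpose, Function.comp, mul_comm, mul_assoc,
      mul_left_comm]
  constructor
  · intro hhyp
    by_contra hcard
    push_neg at hcard
    obtain ⟨i, hi, j, hj, hij⟩ := Finset.one_lt_card.mp hcard
    simp only [Finset.mem_filter] at hi hj
    set v : Fin n → ℝ := ⇑(hM.eigenvectorBasis i)
    set w : Fin n → ℝ := ⇑(hM.eigenvectorBasis j)
    have hv : (star (hM.eigenvectorUnitary : Matrix (Fin n) (Fin n) ℝ)) *ᵥ v = Pi.single i 1 :=
      hM.star_eigenvectorUnitary_mulVec i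
    have hw : (star (hM.eigenvectorUnitary : Matrix (Fin n) (Fin n) ℝ)) *ᵥ w = Pi.single j 1 :=
      hM.star_eigenvectorUnitary_mulVec j
    have h1 : v ⬝ᵥ M *ᵥ v = hM.eigenvalues i := by
      rw [hform, hv]
      rw [Finset.sum_eq_single i] <;> intros <;> simp_all [Pi.single_apply]
    have h2 : w ⬝ᵥ M *ᵥ w = hM.eigenvalues j := by
      rw [hform, hw]
      rw [Finset.sum_eq_single j] <;> intros <;> simp_all [Pi.single_apply]
    have h3 : v ⬝ᵥ M *ᵥ w = 0 := by
      rw [hform, hv, hw]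
      apply Finset.sum_eq_zero
      intro k _
      rcases eq_or_ne k i with rfl | hk
      · simp [Pi.single_apply, hij.symm]
      · simp [Pi.single_apply, hk]
    have := hhyp v w (by rw [h2]; exact hj.2.le)
    rw [h1, h2, h3] at this
    nlinarith [hi.2, hj.2]
  · intro hcard v w hw
    rw [hform] at hw ⊢
    rw [hform, hform]
    exact key_hyperbolic_aux n hM.eigenvalues _ _ hcard hw
end

section
/- Let A be an n × n Hermitian matrix and B the principal (n−1) × (n−1) submatrix obtained by deleting the last row and column. If λₙ ≤ ⋯ ≤ λ₁ are the eigenvalues of A and μₙ ≤ ⋯ ≤ μ₂ are the eigenvalues of B, then λ_{k+1} ≤ μ_{k+1} ≤ λ_k for all 1 ≤ k ≤ n−1 (the eigenvalues interlace). -/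
open Matrix Submodule Finset

section CauchyAux

variable {ι : Type*} [Fintype ι] [DecidableEq ι]
variable {E : Type*} [NormedAddCommGroup E] [InnerProductSpace ℂ E]

set_option linter.unusedSectionVars false

lemma aux_repr_zero (b : OrthonormalBasis ι ℂ E) (s : Finset ι) {x : E}
    (hx : x ∈ Submodule.span ℂ (⇑b '' ↑s)) {i : ι} (hi : i ∉ s) :
    b.repr x i = 0 := by
  induction hx using Submodule.span_induction with
  | mem y hy =>
    obtain ⟨j, hj, rfl⟩ := hy
    have hij : i ≠ j := fun h => hi (h ▸ hj)
    simp [OrthonormalBasis.repr_self, EuclideanSpace.single_apply, hij]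
  | zero => simp
  | add y z _ _ hy hz => simp [hy, hz]
  | smul a y _ hy => simp [hy]

lemma aux_repr_T (b : OrthonormalBasis ι ℂ E) (T : E →ₗ[ℂ] E)
    (hsym : ∀ x y : E, (inner ℂ (T x) y : ℂ) = inner ℂ x (T y))
    (c : ι → ℝ) (hT : ∀ i, T (b i) = (c i : ℂ) • b i) (x : E) (i : ι) :
    b.repr (T x) i = (c i : ℂ) * b.repr x i := by
  rw [OrthonormalBasis.repr_apply_apply, OrthonormalBasis.repr_apply_apply, ← hsym, hT]
  rw [inner_smul_left]
  simp

lemma aux_norm_sq (b : OrthonormalBasis ι ℂ E) (x : E) :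
    ‖x‖ ^ 2 = ∑ i, ‖b.repr x i‖ ^ 2 := by
  rw [← b.repr.norm_map x, EuclideanSpace.norm_eq, Real.sq_sqrt]
  positivity

lemma aux_inner_T (b : OrthonormalBasis ι ℂ E) (T : E →ₗ[ℂ] E)
    (hsym : ∀ x y : E, (inner ℂ (T x) y : ℂ) = inner ℂ x (T y))
    (c : ι → ℝ) (hT : ∀ i, T (b i) = (c i : ℂ) • b i) (x : E) :
    (inner ℂ x (T x) : ℂ).re = ∑ i, c i * ‖b.repr x i‖ ^ 2 := by
  have h1 : (inner ℂ x (T x) : ℂ) = inner ℂ (b.repr x) (b.repr (T x)) :=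
    (b.repr.inner_map_map x (T x)).symm
  rw [h1]
  rw [PiLp.inner_apply]
  have h2 : ∀ i : ι, (inner ℂ (b.repr x i) (b.repr (T x) i) : ℂ)
      = ((c i * ‖b.repr x i‖ ^ 2 : ℝ) : ℂ) := by
    intro i
    rw [aux_repr_T b T hsym c hT, RCLike.inner_apply']
    push_cast
    rw [mul_comm ((c i : ℂ)) _, ← mul_assoc, Complex.conj_mul']
    ring
  simp only [h2]
  rw [← Complex.ofReal_sum]
  simp [← Complex.ofReal_pow]

lemma aux_rayleigh_le (b : OrthonormalBasis ι ℂ E) (T : E →ₗ[ℂ] E)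
    (hsym : ∀ x y : E, (inner ℂ (T x) y : ℂ) = inner ℂ x (T y))
    (c : ι → ℝ) (hT : ∀ i, T (b i) = (c i : ℂ) • b i)
    (s : Finset ι) (M : ℝ) (hM : ∀ i ∈ s, c i ≤ M) {x : E}
    (hx : x ∈ Submodule.span ℂ (⇑b '' ↑s)) :
    (inner ℂ x (T x) : ℂ).re ≤ M * ‖x‖ ^ 2 := by
  have hz : ∀ i ∉ s, ‖b.repr x i‖ ^ 2 = 0 := fun i hi => by
    rw [aux_repr_zero b s hx hi]; simp
  have e1 : ∑ i, c i * ‖b.repr x i‖ ^ 2 = ∑ i ∈ s, c i * ‖b.repr x i‖ ^ 2 :=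
    (Finset.sum_subset (Finset.subset_univ s) (fun i _ hi => by rw [hz i hi]; ring)).symm
  have e2 : ∑ i, ‖b.repr x i‖ ^ 2 = ∑ i ∈ s, ‖b.repr x i‖ ^ 2 :=
    (Finset.sum_subset (Finset.subset_univ s) (fun i _ hi => hz i hi)).symm
  rw [aux_inner_T b T hsym c hT, aux_norm_sq b, e1, e2, Finset.mul_sum]
  exact Finset.sum_le_sum fun i hi =>
    mul_le_mul_of_nonneg_right (hM i hi) (by positivity)

lemma aux_rayleigh_ge (b : OrthonormalBasis ι ℂ E) (T : E →ₗ[ℂ] E)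
    (hsym : ∀ x y : E, (inner ℂ (T x) y : ℂ) = inner ℂ x (T y))
    (c : ι → ℝ) (hT : ∀ i, T (b i) = (c i : ℂ) • b i)
    (s : Finset ι) (M : ℝ) (hM : ∀ i ∈ s, M ≤ c i) {x : E}
    (hx : x ∈ Submodule.span ℂ (⇑b '' ↑s)) :
    M * ‖x‖ ^ 2 ≤ (inner ℂ x (T x) : ℂ).re := by
  have hz : ∀ i ∉ s, ‖b.repr x i‖ ^ 2 = 0 := fun i hi => by
    rw [aux_repr_zero b s hx hi]; simp
  have e1 : ∑ i, c i * ‖b.repr x i‖ ^ 2 = ∑ i ∈ s, c i * ‖b.repr x i‖ ^ 2 :=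
    (Finset.sum_subset (Finset.subset_univ s) (fun i _ hi => by rw [hz i hi]; ring)).symm
  have e2 : ∑ i, ‖b.repr x i‖ ^ 2 = ∑ i ∈ s, ‖b.repr x i‖ ^ 2 :=
    (Finset.sum_subset (Finset.subset_univ s) (fun i _ hi => hz i hi)).symm
  rw [aux_inner_T b T hsym c hT, aux_norm_sq b, e1, e2, Finset.mul_sum]
  exact Finset.sum_le_sum fun i hi =>
    mul_le_mul_of_nonneg_right (hM i hi) (by positivity)

lemma aux_finrank_span (b : OrthonormalBasis ι ℂ E) (s : Finset ι) :
    Module.finrank ℂ (Submodule.span ℂ (⇑b '' ↑s)) = s.card := by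
  classical
  have hinj : Function.Injective ⇑b := b.orthonormal.linearIndependent.injective
  have hli : LinearIndependent ℂ ((↑) : (⇑b '' ↑s : Set E) → E) :=
    (LinearIndepOn.id_image (v := ⇑b) (s := (↑s : Set ι))
      (b.orthonormal.linearIndependent.comp _ Subtype.val_injective)).linearIndependent
  rw [finrank_span_set_eq_card hli]
  rw [Set.toFinset_image]
  simp [Finset.card_image_of_injective _ hinj]

lemma aux_inter (E' : Type*) [NormedAddCommGroup E'] [InnerProductSpace ℂ E']
    [FiniteDimensional ℂ E'] (V W : Submodule ℂ E')
    (h : Module.finrank ℂ E' < Module.finrank ℂ V + Module.finrank ℂ W) :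
    ∃ x : E', x ≠ 0 ∧ x ∈ V ⊓ W := by
  have h1 := Submodule.finrank_sup_add_finrank_inf_eq V W
  have h2 : Module.finrank ℂ ↥(V ⊔ W) ≤ Module.finrank ℂ E' := Submodule.finrank_le _
  have h3 : 0 < Module.finrank ℂ ↥(V ⊓ W) := by omega
  have hne : V ⊓ W ≠ ⊥ := by
    intro hbot
    rw [hbot, finrank_bot] at h3
    omega
  obtain ⟨x, hx, hx0⟩ := Submodule.exists_mem_ne_zero_of_ne_bot hne
  exact ⟨x, hx0, hx⟩

lemma aux_eigen {m : Type*} [Fintype m] [DecidableEq m] {A : Matrix m m ℂ}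
    (hA : A.IsHermitian) (j : m) :
    Matrix.toEuclideanLin A (hA.eigenvectorBasis j)
      = (hA.eigenvalues j : ℂ) • hA.eigenvectorBasis j := by
  have h := hA.mulVec_eigenvectorBasis j
  apply PiLp.ext
  intro i
  have hrfl : Matrix.toEuclideanLin A (hA.eigenvectorBasis j) i
      = (A *ᵥ ⇑(hA.eigenvectorBasis j)) i := rfl
  rw [hrfl, h]
  simp [PiLp.smul_apply, Complex.real_smul]

end CauchyAux

section Jsec

noncomputable def Jmap (n : ℕ) : EuclideanSpace ℂ (Fin n) →ₗ[ℂ] EuclideanSpace ℂ (Fin (n + 1)) where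
  toFun x := WithLp.toLp 2 (Fin.snoc (α := fun _ => ℂ) x.ofLp 0)
  map_add' x y := by
    apply PiLp.ext
    intro j
    induction j using Fin.lastCases with
    | last => simp [Fin.snoc_last, PiLp.add_apply]
    | cast i => simp [Fin.snoc_castSucc, PiLp.add_apply]
  map_smul' a x := by
    apply PiLp.ext
    intro j
    induction j using Fin.lastCases with
    | last => simp [Fin.snoc_last, PiLp.smul_apply]
    | cast i => simp [Fin.snoc_castSucc, PiLp.smul_apply]

lemma Jmap_castSucc {n : ℕ} (x : EuclideanSpace ℂ (Fin n)) (i : Fin n) :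
    Jmap n x i.castSucc = x i := by simp [Jmap]

lemma Jmap_last {n : ℕ} (x : EuclideanSpace ℂ (Fin n)) :
    Jmap n x (Fin.last n) = 0 := by simp [Jmap]

lemma Jmap_inj {n : ℕ} : Function.Injective (Jmap n) := by
  intro x y h
  apply PiLp.ext
  intro i
  have := congrArg (fun z : EuclideanSpace ℂ (Fin (n+1)) => z i.castSucc) h
  simpa [Jmap_castSucc] using this

lemma Jmap_inner {n : ℕ} (x y : EuclideanSpace ℂ (Fin n)) :
    (inner ℂ (Jmap n x) (Jmap n y) : ℂ) = inner ℂ x y := by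
  rw [PiLp.inner_apply, PiLp.inner_apply, Fin.sum_univ_castSucc]
  simp [Jmap_castSucc, Jmap_last, RCLike.inner_apply]

lemma Jmap_norm {n : ℕ} (x : EuclideanSpace ℂ (Fin n)) : ‖Jmap n x‖ = ‖x‖ := by
  have h := Jmap_inner x x
  rw [inner_self_eq_norm_sq_to_K, inner_self_eq_norm_sq_to_K] at h
  have h2 : ‖Jmap n x‖ ^ 2 = ‖x‖ ^ 2 := by exact_mod_cast h
  nlinarith [norm_nonneg (Jmap n x), norm_nonneg x]

lemma Jmap_inner_mulVec {n : ℕ} (A : Matrix (Fin (n + 1)) (Fin (n + 1)) ℂ)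
    (B : Matrix (Fin n) (Fin n) ℂ) (hB : B = A.submatrix Fin.castSucc Fin.castSucc)
    (x : EuclideanSpace ℂ (Fin n)) :
    (inner ℂ (Jmap n x) (Matrix.toEuclideanLin A (Jmap n x)) : ℂ)
      = inner ℂ x (Matrix.toEuclideanLin B x) := by
  have hT : ∀ (m : ℕ) (M : Matrix (Fin m) (Fin m) ℂ) (v : EuclideanSpace ℂ (Fin m)) (i : Fin m),
      Matrix.toEuclideanLin M v i = M.mulVec v i := fun _ _ _ _ => rfl
  rw [PiLp.inner_apply, PiLp.inner_apply, Fin.sum_univ_castSucc]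
  have hlast : (inner ℂ (Jmap n x (Fin.last n))
      (Matrix.toEuclideanLin A (Jmap n x) (Fin.last n)) : ℂ) = 0 := by
    rw [Jmap_last]
    simp [RCLike.inner_apply]
  rw [hlast, add_zero]
  refine Finset.sum_congr rfl fun i _ => ?_
  rw [RCLike.inner_apply, RCLike.inner_apply, Jmap_castSucc, hT, hT, Matrix.mulVec, Matrix.mulVec]
  congr 1
  rw [dotProduct, dotProduct, Fin.sum_univ_castSucc]
  simp [Jmap_castSucc, Jmap_last, hB, Matrix.submatrix_apply]

end Jsec

/-- Cauchy interlacing theorem: if `A` is an `(n+1) × (n+1)` Hermitian matrix and `B`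
is the principal submatrix obtained by deleting the last row and column, then the
increasingly-ordered eigenvalues `lam` of `A` and `mu` of `B` interlace:
`lam k ≤ mu k ≤ lam (k+1)`. -/
theorem cauchy_interlacing (n : ℕ)
    (A : Matrix (Fin (n + 1)) (Fin (n + 1)) ℂ) (hA : A.IsHermitian)
    (B : Matrix (Fin n) (Fin n) ℂ) (hB : B = A.submatrix Fin.castSucc Fin.castSucc)
    (hBH : B.IsHermitian)
    (lam : Fin (n + 1) → ℝ) (mu : Fin n → ℝ)
    (hlam_mono : Monotone lam) (hmu_mono : Monotone mu)
    (hlam : ∃ σ : Equiv.Perm (Fin (n + 1)), lam = hA.eigenvalues ∘ σ)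
    (hmu : ∃ σ : Equiv.Perm (Fin n), mu = hBH.eigenvalues ∘ σ) :
    ∀ k : Fin n, lam k.castSucc ≤ mu k ∧ mu k ≤ lam k.succ := by
  classical
  obtain ⟨σ, hσ⟩ := hlam
  obtain ⟨τ, hτ⟩ := hmu
  set TA := Matrix.toEuclideanLin A with hTAdef
  set TB := Matrix.toEuclideanLin B with hTBdef
  have hsymA : ∀ x y, (inner ℂ (TA x) y : ℂ) = inner ℂ x (TA y) :=
    fun x y => (Matrix.isHermitian_iff_isSymmetric.mp hA) x y
  have hsymB : ∀ x y, (inner ℂ (TB x) y : ℂ) = inner ℂ x (TB y) :=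
    fun x y => (Matrix.isHermitian_iff_isSymmetric.mp hBH) x y
  set vA := hA.eigenvectorBasis.reindex σ.symm with hvAdef
  set vB := hBH.eigenvectorBasis.reindex τ.symm with hvBdef
  have hvA : ∀ i, TA (vA i) = ((lam i : ℂ)) • vA i := by
    intro i
    have h1 : vA i = hA.eigenvectorBasis (σ i) := by
      rw [hvAdef, OrthonormalBasis.reindex_apply, Equiv.symm_symm]
    have h2 : lam i = hA.eigenvalues (σ i) := by rw [hσ]; rfl
    rw [h1, h2, hTAdef]
    exact aux_eigen hA (σ i)
  have hvB : ∀ i, TB (vB i) = ((mu i : ℂ)) • vB i := by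
    intro i
    have h1 : vB i = hBH.eigenvectorBasis (τ i) := by
      rw [hvBdef, OrthonormalBasis.reindex_apply, Equiv.symm_symm]
    have h2 : mu i = hBH.eigenvalues (τ i) := by rw [hτ]; rfl
    rw [h1, h2, hTBdef]
    exact aux_eigen hBH (τ i)
  intro k
  have key : ∀ (sA : Finset (Fin (n + 1))) (sB : Finset (Fin n)),
      n + 1 < sA.card + sB.card →
      ∃ y : EuclideanSpace ℂ (Fin n), y ≠ 0 ∧
        Jmap n y ∈ Submodule.span ℂ (⇑vA '' ↑sA) ∧
        y ∈ Submodule.span ℂ (⇑vB '' ↑sB) := by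
    intro sA sB hcard
    have hdim : Module.finrank ℂ (EuclideanSpace ℂ (Fin (n + 1)))
        < Module.finrank ℂ (Submodule.span ℂ (⇑vA '' ↑sA))
          + Module.finrank ℂ ((Submodule.span ℂ (⇑vB '' ↑sB)).map (Jmap n)) := by
      have h1 := aux_finrank_span vA sA
      have h2 : Module.finrank ℂ ((Submodule.span ℂ (⇑vB '' ↑sB)).map (Jmap n)) = sB.card := by
        rw [← aux_finrank_span vB sB]
        exact (Submodule.equivMapOfInjective _ Jmap_inj _).finrank_eq.symm
      rw [finrank_euclideanSpace_fin, h1, h2]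
      exact hcard
    obtain ⟨x, hx0, hxm⟩ := aux_inter _ _ _ hdim
    rw [Submodule.mem_inf] at hxm
    obtain ⟨hxV, hxW⟩ := hxm
    obtain ⟨y, hyW, rfl⟩ := hxW
    exact ⟨y, fun h => hx0 (by rw [h]; simp), hxV, hyW⟩
  constructor
  · -- lam k.castSucc ≤ mu k
    obtain ⟨y, hy0, hxV, hyW⟩ := key (Finset.Ici k.castSucc) (Finset.Iic k) (by
      rw [Fin.card_Ici, Fin.card_Iic]
      have := k.isLt
      simp only [Fin.coe_castSucc]
      omega)
    have hge : lam k.castSucc * ‖Jmap n y‖ ^ 2 ≤ (inner ℂ (Jmap n y) (TA (Jmap n y)) : ℂ).re :=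
      aux_rayleigh_ge vA TA hsymA lam hvA _ _
        (fun i hi => hlam_mono (Finset.mem_Ici.mp hi)) hxV
    have hle : (inner ℂ y (TB y) : ℂ).re ≤ mu k * ‖y‖ ^ 2 :=
      aux_rayleigh_le vB TB hsymB mu hvB _ _
        (fun i hi => hmu_mono (Finset.mem_Iic.mp hi)) hyW
    have heq : (inner ℂ (Jmap n y) (TA (Jmap n y)) : ℂ).re = (inner ℂ y (TB y) : ℂ).re := by
      rw [hTAdef, hTBdef, Jmap_inner_mulVec A B hB y]
    rw [Jmap_norm] at hge
    have hpos : (0:ℝ) < ‖y‖ ^ 2 := by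
      have : ‖y‖ ≠ 0 := fun h => hy0 (norm_eq_zero.mp h)
      positivity
    have hfin : lam k.castSucc * ‖y‖ ^ 2 ≤ mu k * ‖y‖ ^ 2 := by
      rw [heq] at hge
      linarith
    exact le_of_mul_le_mul_right hfin hpos
  · -- mu k ≤ lam k.succ
    obtain ⟨y, hy0, hxV, hyW⟩ := key (Finset.Iic k.succ) (Finset.Ici k) (by
      rw [Fin.card_Ici, Fin.card_Iic]
      have := k.isLt
      simp only [Fin.val_succ]
      omega)
    have hle : (inner ℂ (Jmap n y) (TA (Jmap n y)) : ℂ).re ≤ lam k.succ * ‖Jmap n y‖ ^ 2 :=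
      aux_rayleigh_le vA TA hsymA lam hvA _ _
        (fun i hi => hlam_mono (Finset.mem_Iic.mp hi)) hxV
    have hge : mu k * ‖y‖ ^ 2 ≤ (inner ℂ y (TB y) : ℂ).re :=
      aux_rayleigh_ge vB TB hsymB mu hvB _ _
        (fun i hi => hmu_mono (Finset.mem_Ici.mp hi)) hyW
    have heq : (inner ℂ (Jmap n y) (TA (Jmap n y)) : ℂ).re = (inner ℂ y (TB y) : ℂ).re := by
      rw [hTAdef, hTBdef, Jmap_inner_mulVec A B hB y]
    rw [Jmap_norm] at hle
    have hpos : (0:ℝ) < ‖y‖ ^ 2 := by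
      have : ‖y‖ ≠ 0 := fun h => hy0 (norm_eq_zero.mp h)
      positivity
    have hfin : mu k * ‖y‖ ^ 2 ≤ lam k.succ * ‖y‖ ^ 2 := by
      rw [heq] at hle
      linarith
    exact le_of_mul_le_mul_right hfin hpos
end

section
/- Let M be an n × n symmetric real matrix with exactly one positive eigenvalue, and let A be a 2 × 2 principal submatrix of M such that there exists v ∈ ℝ² with vᵀAv > 0. Then det(A) ≤ 0. -/
open Matrix

/-- If `M` is a real symmetric matrix with exactly one positive eigenvalue and `A` is a
`2 × 2` principal submatrix with `vᵀ A v > 0` for some `v`, then `det A ≤ 0`. -/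
theorem det_nonpos_of_principal_submatrix (n : ℕ)
    (M : Matrix (Fin n) (Fin n) ℝ) (hM : M.IsHermitian)
    (hpos : (Finset.univ.filter fun i => 0 < hM.eigenvalues i).card = 1)
    (f : Fin 2 → Fin n) (hf : Function.Injective f)
    (A : Matrix (Fin 2) (Fin 2) ℝ) (hA : A = M.submatrix f f)
    (v : Fin 2 → ℝ) (hv : 0 < v ⬝ᵥ A.mulVec v) :
    A.det ≤ 0 := by
  by_contra hdet
  push_neg at hdet
  -- A is symmetric
  have hMapp : ∀ i j, M i j = M j i := by
    intro i j
    have := congr_fun (congr_fun hM j) i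
    simpa [Matrix.conjTranspose_apply] using this
  have hAsym : A 1 0 = A 0 1 := by
    simp [hA, Matrix.submatrix_apply, hMapp]
  have hdet2 : 0 < A 0 0 * A 1 1 - A 0 1 * A 0 1 := by
    rw [Matrix.det_fin_two, hAsym] at hdet; linarith
  have hvq : 0 < A 0 0 * (v 0)^2 + 2 * A 0 1 * (v 0 * v 1) + A 1 1 * (v 1)^2 := by
    have e : v ⬝ᵥ A *ᵥ v
        = A 0 0 * (v 0)^2 + 2 * A 0 1 * (v 0 * v 1) + A 1 1 * (v 1)^2 := by
      simp only [dotProduct, Matrix.mulVec, Fin.sum_univ_two]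
      rw [hAsym]; ring
    rwa [e] at hv
  have ha00 : 0 < A 0 0 := by
    rcases lt_trichotomy (A 0 0) 0 with h | h | h
    · exfalso
      nlinarith [sq_nonneg (A 0 0 * v 0 + A 0 1 * v 1),
        mul_nonneg hdet2.le (sq_nonneg (v 1)), mul_neg_of_neg_of_pos h hvq]
    · exfalso; rw [h] at hdet2; nlinarith [sq_nonneg (A 0 1)]
    · exact h
  -- A is positive definite as a quadratic form
  have hposdef : ∀ w : Fin 2 → ℝ, w ≠ 0 → 0 < w ⬝ᵥ A.mulVec w := by
    intro w hw
    have hw' : w 0 ≠ 0 ∨ w 1 ≠ 0 := by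
      by_contra h
      push_neg at h
      apply hw
      funext i
      fin_cases i <;> simp [h.1, h.2]
    simp only [dotProduct, Matrix.mulVec, Fin.sum_univ_two]
    rw [hAsym]
    rcases eq_or_ne (w 1) 0 with h1 | h1
    · have h0 : w 0 ≠ 0 := by tauto
      rw [h1]
      have : 0 < A 0 0 * (w 0 * w 0) := mul_pos ha00 (mul_self_pos.mpr h0)
      nlinarith
    · nlinarith [sq_nonneg (A 0 0 * w 0 + A 0 1 * w 1),
        mul_pos hdet2 (mul_self_pos.mpr h1), ha00]
  -- the single positive eigenvalue index
  obtain ⟨i₀, hi₀⟩ := Finset.card_eq_one.mp hpos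
  have heig_nonpos : ∀ i, i ≠ i₀ → hM.eigenvalues i ≤ 0 := by
    intro i hi
    by_contra h
    push_neg at h
    have : i ∈ Finset.univ.filter fun i => 0 < hM.eigenvalues i := by
      simp [h]
    rw [hi₀, Finset.mem_singleton] at this
    exact hi this
  -- embedding matrix
  set E : Matrix (Fin n) (Fin 2) ℝ := fun i j => if i = f j then 1 else 0 with hE
  have embed_sum : ∀ (w : Fin 2 → ℝ) (h : Fin n → ℝ),
      ∑ i, (E *ᵥ w) i * h i = ∑ j, w j * h (f j) := by
    intro w h
    simp only [Matrix.mulVec, dotProduct, hE, Finset.sum_mul, ite_mul, one_mul,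
      zero_mul]
    rw [Finset.sum_comm]
    congr 1
    funext j
    rw [Finset.sum_ite_eq' Finset.univ (f j) (fun i => w j * h i)]
    simp [mul_assoc]
  -- the quadratic form identity: xᵀ M x = wᵀ A w for x = E w
  have hq : ∀ w : Fin 2 → ℝ, (E *ᵥ w) ⬝ᵥ M *ᵥ (E *ᵥ w) = w ⬝ᵥ A *ᵥ w := by
    intro w
    have h1 : (E *ᵥ w) ⬝ᵥ M *ᵥ (E *ᵥ w) = ∑ j, w j * (M *ᵥ (E *ᵥ w)) (f j) :=
      embed_sum w _
    rw [h1]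
    simp only [dotProduct, Matrix.mulVec]
    congr 1
    funext j
    congr 1
    have h2 : ∑ k, (E *ᵥ w) k * M (f j) k = ∑ j', w j' * M (f j) (f j') :=
      embed_sum w _
    calc ∑ k, M (f j) k * (E *ᵥ w) k = ∑ k, (E *ᵥ w) k * M (f j) k := by
          simp [mul_comm]
      _ = ∑ j', w j' * M (f j) (f j') := h2
      _ = ∑ j', A j j' * w j' := by
          simp [hA, Matrix.submatrix_apply, mul_comm]
  -- spectral decomposition
  set Uc : Matrix (Fin n) (Fin n) ℝ := (hM.eigenvectorUnitary : Matrix (Fin n) (Fin n) ℝ)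
    with hUc
  set B : Matrix (Fin n) (Fin 2) ℝ := star Uc * E with hB
  have hstarT : star Uc = Ucᵀ := by
    rw [Matrix.star_eq_conjTranspose, Matrix.conjTranspose_eq_transpose_of_trivial]
  have hsum : ∀ w : Fin 2 → ℝ,
      (E *ᵥ w) ⬝ᵥ M *ᵥ (E *ᵥ w) = ∑ i, hM.eigenvalues i * ((B *ᵥ w) i)^2 := by
    intro w
    set x : Fin n → ℝ := E *ᵥ w with hx
    have hy : B *ᵥ w = star Uc *ᵥ x := by
      rw [hB, ← Matrix.mulVec_mulVec]
    conv_lhs => rw [hM.spectral_theorem, Unitary.conjStarAlgAut_apply]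
    rw [← hUc]
    have hD : (RCLike.ofReal ∘ hM.eigenvalues : Fin n → ℝ) = hM.eigenvalues := by
      funext i; simp [RCLike.ofReal]
    rw [← Matrix.mulVec_mulVec, ← Matrix.mulVec_mulVec, dotProduct_mulVec,
      ← Matrix.mulVec_transpose, ← hstarT, hy]
    set y : Fin n → ℝ := star Uc *ᵥ x with hyy
    rw [hD]
    simp only [dotProduct, Matrix.mulVec_diagonal]
    congr 1
    funext i
    ring
  -- choose w ≠ 0 with (B w) i₀ = 0
  obtain ⟨w, hw0, hwker⟩ : ∃ w : Fin 2 → ℝ, w ≠ 0 ∧ (B *ᵥ w) i₀ = 0 := by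
    rcases eq_or_ne (B i₀ 0) 0 with h0 | h0
    · refine ⟨![1, 0], ?_, ?_⟩
      · intro h
        have := congr_fun h 0
        norm_num at this
      · simp [Matrix.mulVec, dotProduct, Fin.sum_univ_two, h0]
    · refine ⟨![B i₀ 1, -(B i₀ 0)], ?_, ?_⟩
      · intro h
        have := congr_fun h 1
        simp at this
        exact h0 this
      · simp [Matrix.mulVec, dotProduct, Fin.sum_univ_two]
        ring
  -- derive the contradiction
  have hle : w ⬝ᵥ A *ᵥ w ≤ 0 := by
    rw [← hq w, hsum w]
    apply Finset.sum_nonpos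
    intro i _
    rcases eq_or_ne i i₀ with rfl | hi
    · rw [hwker]; simp
    · exact mul_nonpos_iff.mpr (Or.inr ⟨heig_nonpos i hi, sq_nonneg _⟩)
  exact absurd (hposdef w hw0) (not_lt.mpr hle)
end

section
/- If f = Σ_{α} (c_α/α!) x^α is a Lorentzian polynomial of degree d in n variables, then for every α with |α| = d and all indices i, j ∈ [n], the coefficients satisfy c_α² ≥ c_{α+e_i−e_j} · c_{α−e_i+e_j}. -/
set_option linter.unusedSectionVars false
open MvPolynomial Matrix
variable {σ : Type*} [Fintype σ] [DecidableEq σ]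

/-- The iterated partial derivative `∂^β` of a multivariate polynomial. -/
noncomputable def mderiv (β : σ →₀ ℕ) (f : MvPolynomial σ ℝ) : MvPolynomial σ ℝ :=
  (Finset.univ : Finset σ).toList.foldr
    (fun i p => (fun q => MvPolynomial.pderiv i q)^[β i] p) f

/-- The support of `f` is M-convex. -/
def MConvexSupport (f : MvPolynomial σ ℝ) : Prop :=
  ∀ a ∈ f.support, ∀ b ∈ f.support, ∀ i : σ, b i < a i →
    ∃ j : σ, a j < b j ∧ (a - Finsupp.single i 1 + Finsupp.single j 1) ∈ f.support

/-- The Hessian matrix of `f` evaluated at the point `x`. -/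
noncomputable def hessAt (f : MvPolynomial σ ℝ) (x : σ → ℝ) : Matrix σ σ ℝ :=
  Matrix.of fun i j => MvPolynomial.eval x (MvPolynomial.pderiv i (MvPolynomial.pderiv j f))

/-- A real symmetric matrix has at most one positive eigenvalue
(counted with multiplicity). -/
def AtMostOnePosEig (H : Matrix σ σ ℝ) : Prop :=
  ∃ hH : H.IsHermitian, (Finset.univ.filter fun i => 0 < hH.eigenvalues i).card ≤ 1

/-- `f` is a Lorentzian polynomial of degree `d`: it is homogeneous of degree `d` with
nonnegative coefficients and M-convex support, and every `(d−2)`-fold partial derivative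
`∂^β f` either vanishes or has Hessian with at most one positive eigenvalue at every
point of the positive orthant. -/
def IsLorentzian (d : ℕ) (f : MvPolynomial σ ℝ) : Prop :=
  f.IsHomogeneous d ∧ (∀ m, 0 ≤ f.coeff m) ∧ MConvexSupport f ∧
  ∀ β : σ →₀ ℕ, (β.sum fun _ k => k) = d - 2 →
    mderiv β f = 0 ∨
      ∀ x : σ → ℝ, (∀ i, 0 < x i) → AtMostOnePosEig (hessAt (mderiv β f) x)

lemma my_coeff_pderiv (i : σ) (f : MvPolynomial σ ℝ) (m : σ →₀ ℕ) :
    (MvPolynomial.pderiv i f).coeff m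
      = ((m i : ℝ) + 1) * f.coeff (m + Finsupp.single i 1) := by
  induction f using MvPolynomial.induction_on' with
  | monomial s a =>
    rw [pderiv_monomial]
    rcases Nat.eq_zero_or_pos (s i) with h0 | hpos
    · rw [h0]
      have : s ≠ m + Finsupp.single i 1 := by
        intro h; rw [h] at h0; simp at h0
      simp [coeff_monomial, this]
    · have hle : Finsupp.single i 1 ≤ s := by
        rw [Finsupp.single_le_iff]; omega
      have hiff : s - Finsupp.single i 1 = m ↔ s = m + Finsupp.single i 1 := by
        constructor
        · intro h; rw [← h, tsub_add_cancel_of_le hle]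
        · intro h; rw [h, add_tsub_cancel_right]
      rcases eq_or_ne (s - Finsupp.single i 1) m with h | h
      · have h2 : s = m + Finsupp.single i 1 := hiff.mp h
        have h3 : s i = m i + 1 := by rw [h2]; simp
        simp [coeff_monomial, h, h2, h3]
        ring
      · have h2 : s ≠ m + Finsupp.single i 1 := fun hh => h (hiff.mpr hh)
        simp [coeff_monomial, h, h2]
  | add p q hp hq => simp [hp, hq]; ring

lemma my_coeff_pderiv_iter (i : σ) (k : ℕ) (f : MvPolynomial σ ℝ) (m : σ →₀ ℕ) :
    ((fun q => MvPolynomial.pderiv i q)^[k] f).coeff m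
      = (↑(∏ t ∈ Finset.range k, (m i + t + 1)) : ℝ) * f.coeff (m + Finsupp.single i k) := by
  induction k generalizing f with
  | zero => simp
  | succ k ih =>
    rw [Function.iterate_succ_apply, ih (MvPolynomial.pderiv i f), my_coeff_pderiv]
    have h1 : (m + Finsupp.single i k) i = m i + k := by simp
    have h2 : m + Finsupp.single i k + Finsupp.single i 1 = m + Finsupp.single i (k+1) := by
      rw [add_assoc, ← Finsupp.single_add]
    rw [h1, h2, Finset.prod_range_succ]
    push_cast
    ring

lemma my_coeff_foldr (β : σ →₀ ℕ) (l : List σ) (hl : l.Nodup) (f : MvPolynomial σ ℝ)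
    (m : σ →₀ ℕ) :
    ((l.foldr (fun i p => (fun q => MvPolynomial.pderiv i q)^[β i] p) f).coeff m)
      = (↑(∏ i ∈ l.toFinset, ∏ t ∈ Finset.range (β i), (m i + t + 1)) : ℝ) *
        f.coeff (m + ∑ i ∈ l.toFinset, Finsupp.single i (β i)) := by
  induction l generalizing m with
  | nil => simp
  | cons a l ih =>
    have ha : a ∉ l := (List.nodup_cons.mp hl).1
    have hnd : l.Nodup := (List.nodup_cons.mp hl).2
    rw [List.foldr_cons, my_coeff_pderiv_iter, ih hnd]
    have hm : ∀ i ∈ l.toFinset, (m + Finsupp.single a (β a)) i = m i := by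
      intro i hi
      have : i ≠ a := by rintro rfl; exact ha (List.mem_toFinset.mp hi)
      simp [Finsupp.single_apply, this.symm]
    have htf : (a :: l).toFinset = insert a l.toFinset := by simp
    have hanotin : a ∉ l.toFinset := fun h => ha (List.mem_toFinset.mp h)
    rw [htf, Finset.prod_insert hanotin, Finset.sum_insert hanotin]
    have hprod : (∏ i ∈ l.toFinset, ∏ t ∈ Finset.range (β i),
        ((m + Finsupp.single a (β a)) i + t + 1))
        = ∏ i ∈ l.toFinset, ∏ t ∈ Finset.range (β i), (m i + t + 1) :=
      Finset.prod_congr rfl (fun i hi => by rw [hm i hi])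
    rw [hprod, add_assoc]
    push_cast
    ring

lemma my_coeff_mderiv (β : σ →₀ ℕ) (f : MvPolynomial σ ℝ) (m : σ →₀ ℕ) :
    (mderiv β f).coeff m
      = (↑(∏ i, ∏ t ∈ Finset.range (β i), (m i + t + 1)) : ℝ) * f.coeff (m + β) := by
  rw [mderiv, my_coeff_foldr β _ (Finset.univ.nodup_toList) f m]
  rw [Finset.toList_toFinset, Finsupp.univ_sum_single]

lemma fact_prod_range (a n : ℕ) :
    a.factorial * ∏ t ∈ Finset.range n, (a + t + 1) = (a + n).factorial := by
  induction n with
  | zero => simp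
  | succ n ih =>
    rw [Finset.prod_range_succ, ← mul_assoc, ih]
    rw [show a + (n+1) = (a + n) + 1 by ring, Nat.factorial_succ]
    ring

lemma core_coeff (β : σ →₀ ℕ) (f : MvPolynomial σ ℝ) (k l : σ) :
    (MvPolynomial.pderiv k (MvPolynomial.pderiv l (mderiv β f))).coeff 0
      = (↑(∏ i, (((β + Finsupp.single k 1 + Finsupp.single l 1) : σ →₀ ℕ) i).factorial) : ℝ) *
        f.coeff (β + Finsupp.single k 1 + Finsupp.single l 1) := by
  rw [my_coeff_pderiv, my_coeff_pderiv, my_coeff_mderiv]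
  simp only [Finsupp.coe_zero, Pi.zero_apply, zero_add, Nat.cast_zero]
  set m : σ →₀ ℕ := Finsupp.single k 1 + Finsupp.single l 1 with hm
  have harg : m + β = β + Finsupp.single k 1 + Finsupp.single l 1 := by
    rw [hm]; ext a; simp; ring
  have h2 : (∏ i, (m i).factorial) = (Finsupp.single k 1) l + 1 := by
    rcases eq_or_ne k l with rfl | hkl
    · rw [Finset.prod_eq_single k (fun b _ hb => by
        simp [hm, Finsupp.single_apply, hb.symm, Ne.symm hb]) (by simp)]
      simp [hm, Finsupp.single_apply]
    · rw [Finset.prod_eq_one]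
      · simp [Finsupp.single_apply, hkl]
      · intro i _
        have : m i = (if i = k then 1 else 0) + (if i = l then 1 else 0) := by
          simp only [hm, Finsupp.add_apply, Finsupp.single_apply]
          congr 1 <;> simp [eq_comm]
        rw [this]; split_ifs <;> simp_all [Nat.factorial]
  have h3 : ((Finsupp.single k 1) l + 1) * (∏ i, ∏ t ∈ Finset.range (β i), (m i + t + 1))
      = ∏ i, (((β + Finsupp.single k 1 + Finsupp.single l 1) : σ →₀ ℕ) i).factorial := by
    rw [← h2, ← Finset.prod_mul_distrib]
    apply Finset.prod_congr rfl
    intro i _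
    rw [fact_prod_range (m i) (β i)]
    congr 1
    rw [hm]; simp; ring
  rw [harg, ← h3]
  push_cast
  ring

lemma degree_univ_sum (d : σ →₀ ℕ) : Finsupp.degree d = ∑ i, d i :=
  Finset.sum_subset (Finset.subset_univ _) (fun _ _ hi => Finsupp.notMem_support_iff.mp hi)

lemma sum_eq_degree (d : σ →₀ ℕ) : (d.sum fun _ k => k) = Finsupp.degree d := rfl

lemma hess_entry (d : ℕ) (f : MvPolynomial σ ℝ) (hf : f.IsHomogeneous d) (β : σ →₀ ℕ)
    (hβ : (β.sum fun _ k => k) + 2 = d) (x : σ → ℝ) (k l : σ) :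
    hessAt (mderiv β f) x k l
      = (↑(∏ i, (((β + Finsupp.single k 1 + Finsupp.single l 1) : σ →₀ ℕ) i).factorial) : ℝ) *
        f.coeff (β + Finsupp.single k 1 + Finsupp.single l 1) := by
  set p := MvPolynomial.pderiv k (MvPolynomial.pderiv l (mderiv β f)) with hp
  have hconst : p = MvPolynomial.C (p.coeff 0) := by
    apply MvPolynomial.ext
    intro m
    rcases eq_or_ne m 0 with rfl | hm
    · simp
    · rw [MvPolynomial.coeff_C, if_neg (Ne.symm hm), hp, my_coeff_pderiv, my_coeff_pderiv,
        my_coeff_mderiv]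
      have hz : f.coeff (m + Finsupp.single k 1 + Finsupp.single l 1 + β) = 0 := by
        apply hf.coeff_eq_zero
        rw [degree_univ_sum]
        have hms : 0 < ∑ i, m i := by
          obtain ⟨a, ha⟩ := Finsupp.ne_iff.mp hm
          have : 0 < m a := by simpa using Nat.pos_of_ne_zero (by simpa using ha)
          exact lt_of_lt_of_le this (Finset.single_le_sum (fun i _ => Nat.zero_le _)
            (Finset.mem_univ a))
        have hsum : ∑ i, ((m + Finsupp.single k 1 + Finsupp.single l 1 + β) : σ →₀ ℕ) i
            = (∑ i, m i) + 1 + 1 + ∑ i, β i := by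
          simp only [Finsupp.add_apply, Finset.sum_add_distrib, Finsupp.single_apply]
          simp [Finset.sum_ite_eq]
        have hbd : (β.sum fun _ k => k) = ∑ i, β i := by
          rw [sum_eq_degree, degree_univ_sum]
        omega
      rw [hz, mul_zero, mul_zero, mul_zero]
  have heval : hessAt (mderiv β f) x k l = MvPolynomial.eval x p := rfl
  rw [heval, hconst, MvPolynomial.eval_C, hp, core_coeff]

lemma quad_decomp (H : Matrix σ σ ℝ) (hH : H.IsHermitian) (v : σ → ℝ) :
    v ⬝ᵥ (H *ᵥ v) = ∑ k, hH.eigenvalues k *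
      ((star (hH.eigenvectorUnitary : Matrix σ σ ℝ) *ᵥ v) k)^2 := by
  set U : Matrix σ σ ℝ := (hH.eigenvectorUnitary : Matrix σ σ ℝ) with hU
  set w : σ → ℝ := star U *ᵥ v with hw
  have hst : (RCLike.ofReal ∘ hH.eigenvalues : σ → ℝ) = hH.eigenvalues := by
    funext k; simp [RCLike.ofReal]
  conv_lhs => rw [hH.spectral_theorem]
  simp only [Unitary.conjStarAlgAut_apply, Unitary.coe_star]
  rw [hst, ← Matrix.mulVec_mulVec, ← Matrix.mulVec_mulVec, Matrix.dotProduct_mulVec]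
  have hvU : v ᵥ* U = w := by
    rw [hw, Matrix.star_eq_conjTranspose, Matrix.mulVec_conjTranspose]
    simp
  rw [hvU, dotProduct]
  apply Finset.sum_congr rfl
  intro k _
  rw [Matrix.mulVec_diagonal]
  change w k * (hH.eigenvalues k * w k) = _
  ring

lemma quad_ineq (H : Matrix σ σ ℝ) (h : AtMostOnePosEig H) (i j : σ) (hij : i ≠ j)
    (hii : 0 ≤ H i i) : H i i * H j j ≤ H i j ^ 2 := by
  by_contra hlt
  push_neg at hlt
  obtain ⟨hH, hcard⟩ := h
  set U : Matrix σ σ ℝ := (hH.eigenvectorUnitary : Matrix σ σ ℝ) with hU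
  have hsym : H j i = H i j := by
    have := hH.apply j i
    simpa using this.symm
  have hHii : 0 < H i i := by
    rcases lt_or_eq_of_le hii with h' | h'
    · exact h'
    · exfalso; rw [← h'] at hlt; nlinarith [sq_nonneg (H i j)]
  have hHjj : 0 < H j j := by nlinarith [sq_nonneg (H i j)]
  set e1 : σ → ℝ := fun a => if a = i then 1 else 0 with he1
  set e2 : σ → ℝ := fun a => if a = j then 1 else 0 with he2
  have hlin : ∀ (x y : ℝ) (k : σ), (star U *ᵥ (fun a => x * e1 a + y * e2 a)) k
      = x * (star U *ᵥ e1) k + y * (star U *ᵥ e2) k := by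
    intro x y k
    simp only [Matrix.mulVec, dotProduct, Finset.mul_sum]
    rw [← Finset.sum_add_distrib]
    apply Finset.sum_congr rfl
    intros; ring
  obtain ⟨x, y, hxy, hker⟩ : ∃ x y : ℝ, ¬(x = 0 ∧ y = 0) ∧ ∀ k, 0 < hH.eigenvalues k →
      (star U *ᵥ (fun a => x * e1 a + y * e2 a)) k = 0 := by
    by_cases hP : (Finset.univ.filter fun k => 0 < hH.eigenvalues k) = ∅
    · refine ⟨1, 0, by simp, fun k hk => ?_⟩
      exact (Finset.eq_empty_iff_forall_notMem.mp hP k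
        (Finset.mem_filter.mpr ⟨Finset.mem_univ k, hk⟩)).elim
    · obtain ⟨k0, hk0⟩ := Finset.nonempty_iff_ne_empty.mpr hP
      have huniq : ∀ k, 0 < hH.eigenvalues k → k = k0 := by
        intro k hk
        exact Finset.card_le_one.mp hcard k
          (Finset.mem_filter.mpr ⟨Finset.mem_univ k, hk⟩) k0 hk0
      set a := (star U *ᵥ e2) k0 with ha
      set b := (star U *ᵥ e1) k0 with hb
      by_cases hab : a = 0 ∧ b = 0
      · refine ⟨1, 0, by simp, fun k hk => ?_⟩
        rw [huniq k hk, hlin, ← ha, ← hb, hab.1, hab.2]; ring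
      · refine ⟨a, -b, ?_, fun k hk => ?_⟩
        · intro hcon
          exact hab ⟨hcon.1, by linarith [hcon.2, neg_eq_zero.mp hcon.2]⟩
        · rw [huniq k hk, hlin, ← ha, ← hb]; ring
  set v : σ → ℝ := fun a => x * e1 a + y * e2 a with hv
  have hform : v ⬝ᵥ (H *ᵥ v) = x^2 * H i i + 2*x*y*H i j + y^2 * H j j := by
    have hsumv : ∀ g : σ → ℝ, ∑ a, v a * g a = x * g i + y * g j := by
      intro g
      simp only [hv, he1, he2, add_mul, ite_mul, one_mul, zero_mul, mul_ite, mul_zero,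
        Finset.sum_add_distrib, Finset.sum_ite_eq', Finset.mem_univ, if_true, mul_one]
    have hmv : ∀ a, (H *ᵥ v) a = x * H a i + y * H a j := by
      intro a
      have : (H *ᵥ v) a = ∑ b, v b * H a b := by
        simp only [Matrix.mulVec, dotProduct]
        apply Finset.sum_congr rfl; intros; ring
      rw [this, hsumv (fun b => H a b)]
    rw [dotProduct, Finset.sum_congr rfl (fun a _ => by rw [hmv a]),
      hsumv (fun a => x * H a i + y * H a j), hsym]
    ring
  have hQpos : 0 < v ⬝ᵥ (H *ᵥ v) := by
    rw [hform]
    rcases eq_or_ne y 0 with rfl | hy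
    · have hx : x ≠ 0 := fun hx => hxy ⟨hx, rfl⟩
      have : 0 < x^2 := pow_two_pos_of_ne_zero hx
      nlinarith
    · have h2 : 0 < (H i i * H j j - H i j^2) * y^2 := by
        apply mul_pos (by nlinarith) (pow_two_pos_of_ne_zero hy)
      nlinarith [sq_nonneg (H i i * x + H i j * y)]
  have hQnonpos : v ⬝ᵥ (H *ᵥ v) ≤ 0 := by
    rw [quad_decomp H hH v]
    apply Finset.sum_nonpos
    intro k _
    rcases le_or_gt (hH.eigenvalues k) 0 with hk | hk
    · have := sq_nonneg ((star U *ᵥ v) k); nlinarith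
    · rw [hv, hker k hk]; simp
  linarith

/-- If `f = Σ_α (c_α / α!) x^α` is Lorentzian of degree `d`, then for every `α` with
`|α| = d` and all `i, j`, `c_α² ≥ c_{α+e_i−e_j} · c_{α−e_i+e_j}` (where `c_γ = 0` if
`γ` has a negative entry). -/
theorem lorentzian_coeff_log_concave (d : ℕ) (f : MvPolynomial σ ℝ)
    (hf : IsLorentzian d f) (c : (σ →₀ ℕ) → ℝ)
    (hc : ∀ m : σ →₀ ℕ, f.coeff m = c m / (m.prod fun _ k => (k.factorial : ℝ)))
    (α : σ →₀ ℕ) (hα : (α.sum fun _ k => k) = d) (i j : σ) :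
    (if α j = 0 then 0 else c (α + Finsupp.single i 1 - Finsupp.single j 1)) *
      (if α i = 0 then 0 else c (α - Finsupp.single i 1 + Finsupp.single j 1))
      ≤ (c α) ^ 2 := by
  obtain ⟨hhom, hnonneg, -, hlor⟩ := hf
  have hprodpos : ∀ m : σ →₀ ℕ, 0 < (m.prod fun _ k => (k.factorial : ℝ)) := by
    intro m
    exact Finset.prod_pos (fun i _ => by positivity)
  have hprod_eq : ∀ m : σ →₀ ℕ,
      (m.prod fun _ k => (k.factorial : ℝ)) = ↑(∏ i, (m i).factorial) := by
    intro m
    rw [Finsupp.prod_fintype _ _ (fun i => by simp), Nat.cast_prod]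
  have hceq : ∀ m, c m = ↑(∏ i, (m i).factorial) * f.coeff m := by
    intro m
    have h1 : c m = (m.prod fun _ k => (k.factorial : ℝ)) * f.coeff m := by
      rw [hc m, mul_comm, div_mul_cancel₀ _ (ne_of_gt (hprodpos m))]
    rw [← hprod_eq m]
    exact h1
  have hcnonneg : ∀ m, 0 ≤ c m := by
    intro m
    rw [hceq m]
    exact mul_nonneg (by positivity) (hnonneg m)
  rcases eq_or_ne i j with rfl | hij
  · rcases eq_or_ne (α i) 0 with h0 | h0
    · rw [if_pos h0, zero_mul]
      exact sq_nonneg _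
    · rw [if_neg h0, if_neg h0]
      have h1 : α + Finsupp.single i 1 - Finsupp.single i 1 = α := by
        ext a
        rw [Finsupp.tsub_apply, Finsupp.add_apply]
        omega
      have h2 : α - Finsupp.single i 1 + Finsupp.single i 1 = α :=
        tsub_add_cancel_of_le (Finsupp.single_le_iff.mpr (Nat.one_le_iff_ne_zero.mpr h0))
      rw [h1, h2, sq]
  · rcases eq_or_ne (α j) 0 with h0j | h0j
    · rw [if_pos h0j, zero_mul]
      exact sq_nonneg _
    rcases eq_or_ne (α i) 0 with h0i | h0i
    · rw [if_pos h0i, mul_zero]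
      exact sq_nonneg _
    rw [if_neg h0j, if_neg h0i]
    have hαi : 1 ≤ α i := Nat.one_le_iff_ne_zero.mpr h0i
    have hαj : 1 ≤ α j := Nat.one_le_iff_ne_zero.mpr h0j
    set β : σ →₀ ℕ := α - Finsupp.single i 1 - Finsupp.single j 1 with hβ
    have happ : ∀ a, β a = α a - (if i = a then 1 else 0) - (if j = a then 1 else 0) := by
      intro a
      rw [hβ, Finsupp.tsub_apply, Finsupp.tsub_apply, Finsupp.single_apply,
        Finsupp.single_apply]
    have hαβ : α = β + Finsupp.single i 1 + Finsupp.single j 1 := by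
      ext a
      rw [Finsupp.add_apply, Finsupp.add_apply, happ a]
      simp only [Finsupp.tsub_apply, Finsupp.add_apply, Finsupp.single_apply]
      by_cases hia : i = a
      · subst hia
        rw [if_pos rfl, if_neg (Ne.symm hij)]
        omega
      · by_cases hja : j = a
        · subst hja
          rw [if_neg hij, if_pos rfl]
          omega
        · rw [if_neg hia, if_neg hja]
          omega
    have hid1 : β + Finsupp.single i 1 + Finsupp.single i 1
        = α + Finsupp.single i 1 - Finsupp.single j 1 := by
      ext a
      rw [Finsupp.add_apply, Finsupp.add_apply, happ a]
      simp only [Finsupp.tsub_apply, Finsupp.add_apply, Finsupp.single_apply]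
      by_cases hia : i = a
      · subst hia
        rw [if_pos rfl, if_neg (Ne.symm hij)]
        omega
      · by_cases hja : j = a
        · subst hja
          rw [if_neg hij, if_pos rfl]
          omega
        · rw [if_neg hia, if_neg hja]
          omega
    have hid2 : β + Finsupp.single j 1 + Finsupp.single j 1
        = α - Finsupp.single i 1 + Finsupp.single j 1 := by
      ext a
      rw [Finsupp.add_apply, Finsupp.add_apply, happ a]
      simp only [Finsupp.tsub_apply, Finsupp.add_apply, Finsupp.single_apply]
      by_cases hia : i = a
      · subst hia
        rw [if_pos rfl, if_neg (Ne.symm hij)]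
        omega
      · by_cases hja : j = a
        · subst hja
          rw [if_neg hij, if_pos rfl]
          omega
        · rw [if_neg hia, if_neg hja]
          omega
    have hsumαβ : (α.sum fun _ k => k) = (β.sum fun _ k => k) + 2 := by
      rw [sum_eq_degree, sum_eq_degree, degree_univ_sum, degree_univ_sum, hαβ]
      simp only [Finsupp.add_apply, Finset.sum_add_distrib, Finsupp.single_apply,
        Finset.sum_ite_eq, Finset.mem_univ, if_true]
    have hβd : (β.sum fun _ k => k) + 2 = d := by omega
    have hβd' : (β.sum fun _ k => k) = d - 2 := by omega
    rcases hlor β hβd' with hzero | hpos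
    · have hzc : ∀ k l : σ, c (β + Finsupp.single k 1 + Finsupp.single l 1) = 0 := by
        intro k l
        have h1 := core_coeff β f k l
        rw [hzero] at h1
        simp only [map_zero, MvPolynomial.coeff_zero] at h1
        have h2 : f.coeff (β + Finsupp.single k 1 + Finsupp.single l 1) = 0 := by
          have hp : (0:ℝ) < ↑(∏ x, (((β + Finsupp.single k 1 + Finsupp.single l 1) : σ →₀ ℕ)
              x).factorial) := by positivity
          rcases mul_eq_zero.mp h1.symm with h | h
          · exact absurd h (ne_of_gt hp)
          · exact h
        rw [hceq, h2, mul_zero]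
      rw [← hid1, ← hid2, hzc i i, hzc j j, zero_mul]
      exact sq_nonneg _
    · have hone : ∀ k : σ, (0:ℝ) < (fun _ => (1:ℝ)) k := fun k => one_pos
      have hH := hpos (fun _ => 1) hone
      set H := hessAt (mderiv β f) (fun _ => 1) with hHdef
      have hentry : ∀ k l : σ, H k l = c (β + Finsupp.single k 1 + Finsupp.single l 1) := by
        intro k l
        rw [hHdef, hess_entry d f hhom β hβd, hceq]
      have hkey := quad_ineq H hH i j hij (by rw [hentry i i]; exact hcnonneg _)
      rw [hentry i i, hentry j j, hentry i j] at hkey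
      rw [← hid1, ← hid2]
      calc c (β + Finsupp.single i 1 + Finsupp.single i 1) *
            c (β + Finsupp.single j 1 + Finsupp.single j 1)
          ≤ c (β + Finsupp.single i 1 + Finsupp.single j 1) ^ 2 := hkey
        _ = c α ^ 2 := by rw [← hαβ]
end
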